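/- For every pair (r,t) ∈ ℝ², the 7-dimensional algebra g_6(r,t) with brackets ab=c, ac=d, ad=e, ae=f, af=g, ag=rg, bc=e, bd=f, be=rtf+(1−t)g, bf=rg, bg=r²g, cd=−rtf+tg satisfies the Jacobi identity, hence is a Lie algebra; moreover g_6(r,t) is nilpotent if and only if r = 0. -/
import Mathlib


noncomputable section

/-- Standard basis vector of `ℝ⁷`. -/
def e (k : Fin 7) : Fin 7 → ℝ := Pi.single k 1

/-- Structure constants of `g₆(r,t)` (basis `a,…,g = e 0,…,e 6`):
`ab=c, ac=d, ad=e, ae=f, af=g, ag=rg, bc=e, bd=f, be=rtf+(1−t)g, bf=rg, bg=r²g,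
cd=−rtf+tg`, extended antisymmetrically. -/
def tbl (r t : ℝ) : Fin 7 → Fin 7 → Fin 7 → ℝ :=
  ![![0, e 2, e 3, e 4, e 5, e 6, r • e 6],
    ![-e 2, 0, e 4, e 5, (r * t) • e 5 + (1 - t) • e 6, r • e 6, (r ^ 2) • e 6],
    ![-e 3, -e 4, 0, -(r * t) • e 5 + t • e 6, 0, 0, 0],
    ![-e 4, -e 5, (r * t) • e 5 - t • e 6, 0, 0, 0, 0],
    ![-e 5, -((r * t) • e 5 + (1 - t) • e 6), 0, 0, 0, 0, 0],
    ![-e 6, -(r • e 6), 0, 0, 0, 0, 0],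
    ![-(r • e 6), -((r ^ 2) • e 6), 0, 0, 0, 0, 0]]

/-- The bracket of `g₆(r,t)`. -/
def br (r t : ℝ) (x y : Fin 7 → ℝ) : Fin 7 → ℝ :=
  ∑ p : Fin 7, ∑ q : Fin 7, (x p * y q) • tbl r t p q

/-- Lower central series of a bracket. -/
def lcs (μ : (Fin 7 → ℝ) → (Fin 7 → ℝ) → (Fin 7 → ℝ)) : ℕ → Submodule ℝ (Fin 7 → ℝ)
  | 0 => ⊤
  | j + 1 => Submodule.span ℝ {w | ∃ u ∈ lcs μ j, ∃ v, w = μ u v}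

/- ### Auxiliary lemmas -/

lemma br_apply' (r t : ℝ) (x y : Fin 7 → ℝ) (i : Fin 7) :
    br r t x y i = ∑ p : Fin 7, ∑ q : Fin 7, (x p * y q) * tbl r t p q i := by
  simp [br, Finset.sum_apply, smul_eq_mul]

lemma aux_cons_val_five {α : Type*} (a₀ a₁ a₂ a₃ a₄ a₅ a₆ : α) :
    ![a₀,a₁,a₂,a₃,a₄,a₅,a₆] 5 = a₅ := rfl
lemma aux_cons_val_six {α : Type*} (a₀ a₁ a₂ a₃ a₄ a₅ a₆ : α) :
    ![a₀,a₁,a₂,a₃,a₄,a₅,a₆] 6 = a₆ := rfl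

lemma brc0 (r t : ℝ) (x y : Fin 7 → ℝ) : br r t x y 0 = 0 := by
  simp only [br_apply', Fin.sum_univ_seven, tbl,
    Matrix.cons_val_zero, Matrix.cons_val_one, Matrix.head_cons,
    Matrix.cons_val_two, Matrix.cons_val_three, Matrix.cons_val_four,
    aux_cons_val_five, aux_cons_val_six, Matrix.tail_cons]
  simp (config := { decide := true }) [e, Pi.single_apply]

lemma brc1 (r t : ℝ) (x y : Fin 7 → ℝ) : br r t x y 1 = 0 := by
  simp only [br_apply', Fin.sum_univ_seven, tbl,
    Matrix.cons_val_zero, Matrix.cons_val_one, Matrix.head_cons,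
    Matrix.cons_val_two, Matrix.cons_val_three, Matrix.cons_val_four,
    aux_cons_val_five, aux_cons_val_six, Matrix.tail_cons]
  simp (config := { decide := true }) [e, Pi.single_apply]

lemma brc2 (r t : ℝ) (x y : Fin 7 → ℝ) :
    br r t x y 2 = x 0 * y 1 - x 1 * y 0 := by
  simp only [br_apply', Fin.sum_univ_seven, tbl,
    Matrix.cons_val_zero, Matrix.cons_val_one, Matrix.head_cons,
    Matrix.cons_val_two, Matrix.cons_val_three, Matrix.cons_val_four,
    aux_cons_val_five, aux_cons_val_six, Matrix.tail_cons]
  simp (config := { decide := true }) [e, Pi.single_apply]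
  ring

lemma brc3 (r t : ℝ) (x y : Fin 7 → ℝ) :
    br r t x y 3 = x 0 * y 2 - x 2 * y 0 := by
  simp only [br_apply', Fin.sum_univ_seven, tbl,
    Matrix.cons_val_zero, Matrix.cons_val_one, Matrix.head_cons,
    Matrix.cons_val_two, Matrix.cons_val_three, Matrix.cons_val_four,
    aux_cons_val_five, aux_cons_val_six, Matrix.tail_cons]
  simp (config := { decide := true }) [e, Pi.single_apply]
  ring

lemma brc4 (r t : ℝ) (x y : Fin 7 → ℝ) :
    br r t x y 4 = (x 0 * y 3 - x 3 * y 0) + (x 1 * y 2 - x 2 * y 1) := by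
  simp only [br_apply', Fin.sum_univ_seven, tbl,
    Matrix.cons_val_zero, Matrix.cons_val_one, Matrix.head_cons,
    Matrix.cons_val_two, Matrix.cons_val_three, Matrix.cons_val_four,
    aux_cons_val_five, aux_cons_val_six, Matrix.tail_cons]
  simp (config := { decide := true }) [e, Pi.single_apply]
  ring

lemma brc5 (r t : ℝ) (x y : Fin 7 → ℝ) :
    br r t x y 5 = (x 0 * y 4 - x 4 * y 0) + (x 1 * y 3 - x 3 * y 1)
      + (r * t) * (x 1 * y 4 - x 4 * y 1) - (r * t) * (x 2 * y 3 - x 3 * y 2) := by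
  simp only [br_apply', Fin.sum_univ_seven, tbl,
    Matrix.cons_val_zero, Matrix.cons_val_one, Matrix.head_cons,
    Matrix.cons_val_two, Matrix.cons_val_three, Matrix.cons_val_four,
    aux_cons_val_five, aux_cons_val_six, Matrix.tail_cons]
  simp (config := { decide := true }) [e, Pi.single_apply]
  ring

lemma brc6 (r t : ℝ) (x y : Fin 7 → ℝ) :
    br r t x y 6 = (x 0 * y 5 - x 5 * y 0) + r * (x 0 * y 6 - x 6 * y 0)
      + (1 - t) * (x 1 * y 4 - x 4 * y 1) + r * (x 1 * y 5 - x 5 * y 1)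
      + r ^ 2 * (x 1 * y 6 - x 6 * y 1) + t * (x 2 * y 3 - x 3 * y 2) := by
  simp only [br_apply', Fin.sum_univ_seven, tbl,
    Matrix.cons_val_zero, Matrix.cons_val_one, Matrix.head_cons,
    Matrix.cons_val_two, Matrix.cons_val_three, Matrix.cons_val_four,
    aux_cons_val_five, aux_cons_val_six, Matrix.tail_cons]
  simp (config := { decide := true }) [e, Pi.single_apply]
  ring

/-- Vectors vanishing in coordinates `< k`. -/
def V (k : ℕ) : Submodule ℝ (Fin 7 → ℝ) where
  carrier := {w | ∀ i : Fin 7, (i : ℕ) < k → w i = 0}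
  add_mem' := by
    intro a b ha hb i hi
    simp [ha i hi, hb i hi]
  zero_mem' := fun i _ => rfl
  smul_mem' := by
    intro c a ha i hi
    simp [ha i hi]

lemma mem_V {k : ℕ} {w : Fin 7 → ℝ} :
    w ∈ V k ↔ ∀ i : Fin 7, (i : ℕ) < k → w i = 0 := Iff.rfl

lemma V7_le_bot : V 7 ≤ ⊥ := by
  intro w hw
  rw [mem_V] at hw
  simp only [Submodule.mem_bot]
  funext i
  exact hw i i.isLt

lemma base_V2 (r t : ℝ) (u v : Fin 7 → ℝ) : br r t u v ∈ V 2 := by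
  rw [mem_V]
  intro i hi
  fin_cases i
  · exact brc0 r t u v
  · exact brc1 r t u v
  · exact absurd (show (2:ℕ) < 2 from hi) (by omega)
  · exact absurd (show (3:ℕ) < 2 from hi) (by omega)
  · exact absurd (show (4:ℕ) < 2 from hi) (by omega)
  · exact absurd (show (5:ℕ) < 2 from hi) (by omega)
  · exact absurd (show (6:ℕ) < 2 from hi) (by omega)

lemma step_V (t : ℝ) (k : ℕ) (hk : 2 ≤ k) (u v : Fin 7 → ℝ) (hu : u ∈ V k) :
    br 0 t u v ∈ V (k + 1) := by
  rw [mem_V] at hu ⊢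
  intro i hi
  fin_cases i
  · exact brc0 0 t u v
  · exact brc1 0 t u v
  · show br 0 t u v 2 = 0
    rw [brc2, hu 0 (by show (0:ℕ) < k; omega), hu 1 (by show (1:ℕ) < k; omega)]
    ring
  · have hi' : (3:ℕ) < k + 1 := hi
    show br 0 t u v 3 = 0
    rw [brc3, hu 0 (by show (0:ℕ) < k; omega), hu 2 (by show (2:ℕ) < k; omega)]
    ring
  · have hi' : (4:ℕ) < k + 1 := hi
    show br 0 t u v 4 = 0
    rw [brc4, hu 0 (by show (0:ℕ) < k; omega), hu 1 (by show (1:ℕ) < k; omega),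
        hu 2 (by show (2:ℕ) < k; omega), hu 3 (by show (3:ℕ) < k; omega)]
    ring
  · have hi' : (5:ℕ) < k + 1 := hi
    show br 0 t u v 5 = 0
    rw [brc5, hu 0 (by show (0:ℕ) < k; omega), hu 1 (by show (1:ℕ) < k; omega),
        hu 2 (by show (2:ℕ) < k; omega), hu 3 (by show (3:ℕ) < k; omega),
        hu 4 (by show (4:ℕ) < k; omega)]
    ring
  · have hi' : (6:ℕ) < k + 1 := hi
    show br 0 t u v 6 = 0
    rw [brc6, hu 0 (by show (0:ℕ) < k; omega), hu 1 (by show (1:ℕ) < k; omega),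
        hu 2 (by show (2:ℕ) < k; omega), hu 3 (by show (3:ℕ) < k; omega),
        hu 4 (by show (4:ℕ) < k; omega), hu 5 (by show (5:ℕ) < k; omega)]
    ring

lemma br_e (r t : ℝ) (p q : Fin 7) : br r t (e p) (e q) = tbl r t p q := by
  simp [br, e, Pi.single_apply, ite_smul, Finset.sum_ite_eq', mul_comm]

/- ### The theorem -/

/-- For every `(r,t) ∈ ℝ²` the algebra `g₆(r,t)` satisfies the Jacobi identity, hence is
a Lie algebra; moreover `g₆(r,t)` is nilpotent if and only if `r = 0`. -/
theorem g6_jacobi_and_nilpotent_iff (r t : ℝ) :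
    (∀ x y z : Fin 7 → ℝ,
      br r t (br r t x y) z + br r t (br r t y z) x + br r t (br r t z x) y = 0) ∧
    ((∃ j : ℕ, lcs (br r t) j = ⊥) ↔ r = 0) := by
  constructor
  · -- Jacobi identity
    intro x y z
    funext i
    simp only [Pi.add_apply, Pi.zero_apply]
    fin_cases i
    · show br r t (br r t x y) z 0 + br r t (br r t y z) x 0 + br r t (br r t z x) y 0 = 0
      simp only [brc0, brc1, brc2, brc3, brc4, brc5, brc6]
      ring
    · show br r t (br r t x y) z 1 + br r t (br r t y z) x 1 + br r t (br r t z x) y 1 = 0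
      simp only [brc0, brc1, brc2, brc3, brc4, brc5, brc6]
      ring
    · show br r t (br r t x y) z 2 + br r t (br r t y z) x 2 + br r t (br r t z x) y 2 = 0
      simp only [brc0, brc1, brc2, brc3, brc4, brc5, brc6]
      ring
    · show br r t (br r t x y) z 3 + br r t (br r t y z) x 3 + br r t (br r t z x) y 3 = 0
      simp only [brc0, brc1, brc2, brc3, brc4, brc5, brc6]
      ring
    · show br r t (br r t x y) z 4 + br r t (br r t y z) x 4 + br r t (br r t z x) y 4 = 0
      simp only [brc0, brc1, brc2, brc3, brc4, brc5, brc6]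
      ring
    · show br r t (br r t x y) z 5 + br r t (br r t y z) x 5 + br r t (br r t z x) y 5 = 0
      simp only [brc0, brc1, brc2, brc3, brc4, brc5, brc6]
      ring
    · show br r t (br r t x y) z 6 + br r t (br r t y z) x 6 + br r t (br r t z x) y 6 = 0
      simp only [brc0, brc1, brc2, brc3, brc4, brc5, brc6]
      ring
  constructor
  · -- nilpotent → r = 0
    rintro ⟨j, hj⟩
    by_contra hr
    -- e 6 lies in every term of the lower central series
    have key : ∀ n : ℕ, e 6 ∈ lcs (br r t) n := by
      intro n
      induction n with
      | zero => exact Submodule.mem_top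
      | succ m ih =>
        have hgen : br r t (e 6) (e 0) ∈ lcs (br r t) (m + 1) := by
          apply Submodule.subset_span
          exact ⟨e 6, ih, e 0, rfl⟩
        have hval : br r t (e 6) (e 0) = -(r • e 6) := by
          rw [br_e]; rfl
        have : (-(r⁻¹)) • (-(r • e 6)) = e 6 := by
          rw [neg_smul, smul_neg, neg_neg, smul_smul, inv_mul_cancel₀ hr, one_smul]
        rw [hval] at hgen
        rw [← this]
        exact Submodule.smul_mem (lcs (br r t) (m + 1)) (-(r⁻¹)) hgen
    have h6 : e 6 ∈ (⊥ : Submodule ℝ (Fin 7 → ℝ)) := hj ▸ key j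
    rw [Submodule.mem_bot] at h6
    have : (e 6) 6 = 0 := by rw [h6]; rfl
    rw [show (e 6) 6 = 1 from rfl] at this
    norm_num at this
  · -- r = 0 → nilpotent
    intro hr
    subst hr
    refine ⟨6, ?_⟩
    -- chain of inclusions
    have h1 : lcs (br 0 t) 1 ≤ V 2 := by
      rw [show lcs (br 0 t) 1 = Submodule.span ℝ
        {w | ∃ u ∈ lcs (br 0 t) 0, ∃ v, w = br 0 t u v} from rfl]
      rw [Submodule.span_le]
      rintro w ⟨u, _, v, rfl⟩
      exact base_V2 0 t u v
    have step : ∀ (j : ℕ) (k : ℕ), 2 ≤ k → lcs (br 0 t) j ≤ V k →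
        lcs (br 0 t) (j + 1) ≤ V (k + 1) := by
      intro j k hk hjk
      rw [show lcs (br 0 t) (j + 1) = Submodule.span ℝ
        {w | ∃ u ∈ lcs (br 0 t) j, ∃ v, w = br 0 t u v} from rfl]
      rw [Submodule.span_le]
      rintro w ⟨u, hu, v, rfl⟩
      exact step_V t k hk u v (hjk hu)
    have h2 : lcs (br 0 t) 2 ≤ V 3 := step 1 2 (by norm_num) h1
    have h3 : lcs (br 0 t) 3 ≤ V 4 := step 2 3 (by norm_num) h2
    have h4 : lcs (br 0 t) 4 ≤ V 5 := step 3 4 (by norm_num) h3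
    have h5 : lcs (br 0 t) 5 ≤ V 6 := step 4 5 (by norm_num) h4
    have h6 : lcs (br 0 t) 6 ≤ V 7 := step 5 6 (by norm_num) h5
    exact le_bot_iff.mp (h6.trans V7_le_bot)
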